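/- Let {(s_k, y_k, x_k)} be generated by the proximal ADMM with θ > 0 and define Δy_k = y_k - y_{k-1}, Δx_k = x_k - x_{k-1}. Then for every k ≥ 2: (1/θ)⟨CΔy_k, Δx_k⟩ ≥ ((1-θ)/θ)⟨CΔy_k, Δx_{k-1}⟩ + (1/2)‖Δy_k‖²_G - (1/2)‖Δy_{k-1}‖²_G, where ‖y‖²_G = ⟨Gy, y⟩. -/

import Mathlib

set_option maxHeartbeats 1000000


/-- Convexity for an extended-real-valued function. -/
def ERealConvexOn {Y : Type*} [AddCommGroup Y] [Module ℝ Y] (f : Y → EReal) : Prop :=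
  ∀ x y : Y, ∀ a b : ℝ, 0 ≤ a → 0 ≤ b → a + b = 1 →
    f (a • x + b • y) ≤ (a : EReal) * f x + (b : EReal) * f y

/-- Let `{(s_k, y_k, x_k)}` be generated by the proximal ADMM with `θ > 0`, and set
`Δy_k = y_k - y_{k-1}`, `Δx_k = x_k - x_{k-1}`. Then for every `k ≥ 2`:
`(1/θ)⟨CΔy_k, Δx_k⟩ ≥ ((1-θ)/θ)⟨CΔy_k, Δx_{k-1}⟩ + (1/2)‖Δy_k‖²_G - (1/2)‖Δy_{k-1}‖²_G`,
where `‖y‖²_G = ⟨Gy, y⟩`. -/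
theorem admm_delta_inequality
    {S Y X : Type*}
    [NormedAddCommGroup S] [InnerProductSpace ℝ S] [FiniteDimensional ℝ S]
    [NormedAddCommGroup Y] [InnerProductSpace ℝ Y] [FiniteDimensional ℝ Y]
    [NormedAddCommGroup X] [InnerProductSpace ℝ X] [FiniteDimensional ℝ X]
    (f : Y → EReal) (g : S → EReal)
    (hfbot : ∀ y, f y ≠ ⊥) (hfne : ∃ y, f y ≠ ⊤) (hflsc : LowerSemicontinuous f)
    (hfconv : ERealConvexOn f)
    (hgbot : ∀ s, g s ≠ ⊥) (hgne : ∃ s, g s ≠ ⊤) (hglsc : LowerSemicontinuous g)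
    (hgconv : ERealConvexOn g)
    (C : Y →ₗ[ℝ] X) (D : S →ₗ[ℝ] X)
    (Hop : S →ₗ[ℝ] S) (Gop : Y →ₗ[ℝ] Y)
    (hHsa : ∀ u v : S, (inner ℝ (Hop u) v : ℝ) = (inner ℝ u (Hop v) : ℝ))
    (hHpsd : ∀ v : S, 0 ≤ (inner ℝ (Hop v) v : ℝ))
    (hGsa : ∀ u v : Y, (inner ℝ (Gop u) v : ℝ) = (inner ℝ u (Gop v) : ℝ))
    (hGpsd : ∀ v : Y, 0 ≤ (inner ℝ (Gop v) v : ℝ))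
    (c : X) (β θ : ℝ) (hβ : 0 < β) (hθ : 0 < θ)
    (s : ℕ → S) (y : ℕ → Y) (x : ℕ → X)
    (hs : ∀ k, 1 ≤ k → ∀ sv : S,
      g (s k) + ((-(inner ℝ (x (k - 1)) (D (s k)) : ℝ)
          + β / 2 * ‖C (y (k - 1)) + D (s k) - c‖^2
          + 1 / 2 * (inner ℝ (s k - s (k - 1)) (Hop (s k - s (k - 1))) : ℝ) : ℝ) : EReal)
      ≤ g sv + ((-(inner ℝ (x (k - 1)) (D sv) : ℝ)
          + β / 2 * ‖C (y (k - 1)) + D sv - c‖^2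
          + 1 / 2 * (inner ℝ (sv - s (k - 1)) (Hop (sv - s (k - 1))) : ℝ) : ℝ) : EReal))
    (hy : ∀ k, 1 ≤ k → ∀ yv : Y,
      f (y k) + ((-(inner ℝ (x (k - 1)) (C (y k)) : ℝ)
          + β / 2 * ‖C (y k) + D (s k) - c‖^2
          + 1 / 2 * (inner ℝ (y k - y (k - 1)) (Gop (y k - y (k - 1))) : ℝ) : ℝ) : EReal)
      ≤ f yv + ((-(inner ℝ (x (k - 1)) (C yv) : ℝ)
          + β / 2 * ‖C yv + D (s k) - c‖^2
          + 1 / 2 * (inner ℝ (yv - y (k - 1)) (Gop (yv - y (k - 1))) : ℝ) : ℝ) : EReal))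
    (hx : ∀ k, 1 ≤ k → x k = x (k - 1) - (θ * β) • (C (y k) + D (s k) - c))
    (k : ℕ) (hk : 2 ≤ k) :
    (1 / θ) * (inner ℝ (C (y k - y (k - 1))) (x k - x (k - 1)) : ℝ)
      ≥ ((1 - θ) / θ) * (inner ℝ (C (y k - y (k - 1))) (x (k - 1) - x (k - 2)) : ℝ)
        + 1 / 2 * (inner ℝ (Gop (y k - y (k - 1))) (y k - y (k - 1)) : ℝ)
        - 1 / 2 * (inner ℝ (Gop (y (k - 1) - y (k - 2))) (y (k - 1) - y (k - 2)) : ℝ) := by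
  have hθ0 : θ ≠ 0 := ne_of_gt hθ
  -- finiteness of f at iterates
  have hfin : ∀ j, 1 ≤ j → f (y j) ≠ ⊤ := by
    intro j hj htop
    obtain ⟨y0, hy0⟩ := hfne
    have h := hy j hj y0
    rw [htop, show f y0 = (((f y0).toReal : ℝ) : EReal) from (EReal.coe_toReal hy0 (hfbot y0)).symm,
      ← EReal.coe_add, EReal.top_add_coe] at h
    exact EReal.coe_ne_top _ (top_le_iff.mp h)
  -- variational inequality for the y-subproblem
  have VI : ∀ j, 1 ≤ j → ∀ a b : ℝ, ∀ v : Y, f (y j) = (a : EReal) → f v = (b : EReal) →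
      a ≤ b + (-(inner ℝ (C (v - y j)) (x (j-1)) : ℝ)
        + (1/θ) * (inner ℝ (C (v - y j)) (x (j-1) - x j) : ℝ)
        + (inner ℝ (Gop (y j - y (j-1))) (v - y j) : ℝ)) := by
    intro j hj a b v ha hb
    set d := v - y j with hd
    set w := C (y j) + D (s j) - c with hw
    set Δ := y j - y (j-1) with hΔ
    set L0 : ℝ := -(inner ℝ (x (j-1)) (C d) : ℝ) + β * (inner ℝ w (C d) : ℝ)
        + (inner ℝ (Gop Δ) d : ℝ) with hL0
    set Q : ℝ := β/2 * ‖C d‖^2 + 1/2 * (inner ℝ (Gop d) d : ℝ) with hQ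
    have hQ0 : 0 ≤ Q := by
      have h1 : (0:ℝ) ≤ β/2 * ‖C d‖^2 := by positivity
      have h2 := hGpsd d
      rw [hQ]; linarith
    have key : ∀ t : ℝ, 0 < t → t ≤ 1 → a ≤ b + L0 + t * Q := by
      intro t ht ht1
      have hconv := hfconv (y j) v (1-t) t (by linarith) (le_of_lt ht) (by ring)
      rw [ha, hb] at hconv
      set yt := (1-t) • y j + t • v with hyt
      have hyt' : yt = y j + t • d := by rw [hyt, hd]; module
      have hconv' : f yt ≤ (((1-t)*a + t*b : ℝ) : EReal) := by
        rw [EReal.coe_add, EReal.coe_mul, EReal.coe_mul]; exact hconv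
      have H := hy j hj yt
      rw [ha] at H
      have H2 := H.trans (add_le_add_left hconv' _)
      rw [← EReal.coe_add, ← EReal.coe_add] at H2
      have H3 := EReal.coe_le_coe_iff.mp H2
      rw [← hw, ← hΔ] at H3
      have e1 : C yt = C (y j) + t • C d := by rw [hyt']; simp [map_add, map_smul]
      have e2 : C yt + D (s j) - c = w + t • C d := by rw [e1, hw]; abel
      have e3 : yt - y (j-1) = Δ + t • d := by rw [hyt', hΔ]; abel
      have e4 : (inner ℝ (x (j-1)) (C yt) : ℝ)
          = (inner ℝ (x (j-1)) (C (y j)) : ℝ) + t * (inner ℝ (x (j-1)) (C d) : ℝ) := by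
        rw [e1, inner_add_right, real_inner_smul_right]
      have e5 : ‖C yt + D (s j) - c‖^2
          = ‖w‖^2 + 2*(t*(inner ℝ w (C d) : ℝ)) + t^2*‖C d‖^2 := by
        rw [e2, norm_add_sq_real, real_inner_smul_right, norm_smul, mul_pow,
          Real.norm_eq_abs, sq_abs]
      have c1 : (inner ℝ Δ (Gop d) : ℝ) = (inner ℝ (Gop Δ) d : ℝ) := (hGsa Δ d).symm
      have c2 : (inner ℝ d (Gop Δ) : ℝ) = (inner ℝ (Gop Δ) d : ℝ) := real_inner_comm _ _
      have c3 : (inner ℝ d (Gop d) : ℝ) = (inner ℝ (Gop d) d : ℝ) := real_inner_comm _ _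
      have e6 : (inner ℝ (yt - y (j-1)) (Gop (yt - y (j-1))) : ℝ)
          = (inner ℝ Δ (Gop Δ) : ℝ) + 2*(t*(inner ℝ (Gop Δ) d : ℝ))
            + t^2 * (inner ℝ (Gop d) d : ℝ) := by
        rw [e3, map_add, map_smul]
        simp only [inner_add_left, inner_add_right, real_inner_smul_left,
          real_inner_smul_right]
        rw [c1, c2, c3]; ring
      rw [e4, e5, e6] at H3
      rw [hL0, hQ]
      refine le_of_mul_le_mul_left ?_ ht
      nlinarith [H3]
    have hlim : a ≤ b + L0 := by
      by_contra hcon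
      push_neg at hcon
      have hpos : 0 < a - (b + L0) := by linarith
      set t := min 1 ((a - (b + L0))/(2*(Q+1))) with htdef
      have ht : 0 < t := lt_min one_pos (div_pos hpos (by linarith))
      have h2 := key t ht (min_le_left _ _)
      have ht2 : t ≤ (a - (b + L0))/(2*(Q+1)) := min_le_right _ _
      have h3 : t * Q ≤ ((a - (b + L0))/(2*(Q+1))) * Q := mul_le_mul_of_nonneg_right ht2 hQ0
      have h4 : ((a - (b + L0))/(2*(Q+1))) * Q < a - (b + L0) := by
        rw [div_mul_eq_mul_div, div_lt_iff₀ (by linarith : (0:ℝ) < 2*(Q+1))]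
        nlinarith [mul_pos hpos (by linarith : (0:ℝ) < Q + 2)]
      have h5 : t * Q < a - (b + L0) := lt_of_le_of_lt h3 h4
      linarith
    have hxw : x (j-1) - x j = (θ*β) • w := by
      rw [hx j hj, ← hw]; abel
    have hBw : β * (inner ℝ w (C d) : ℝ) = (1/θ) * (inner ℝ (C d) (x (j-1) - x j) : ℝ) := by
      rw [hxw, real_inner_smul_right, real_inner_comm (C d) w]
      field_simp
    rw [hL0, hBw, real_inner_comm (C d) (x (j-1))] at hlim
    exact hlim
  -- apply at k and k-1
  have hk1 : (1:ℕ) ≤ k - 1 := by omega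
  have hfkT := hfin k (by omega)
  have hfk1T := hfin (k-1) hk1
  have hfk : f (y k) = (((f (y k)).toReal : ℝ) : EReal) := (EReal.coe_toReal hfkT (hfbot _)).symm
  have hfk1 : f (y (k-1)) = (((f (y (k-1))).toReal : ℝ) : EReal) :=
    (EReal.coe_toReal hfk1T (hfbot _)).symm
  have h1 := VI k (by omega) _ _ (y (k-1)) hfk hfk1
  have h2 := VI (k-1) hk1 _ _ (y k) hfk1 hfk
  rw [show k - 1 - 1 = k - 2 by omega] at h2
  have hC := hGpsd ((y k - y (k-1)) - (y (k-1) - y (k-2)))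
  have gsym : ∀ u v : Y, (inner ℝ (Gop u) v : ℝ) = (inner ℝ (Gop v) u : ℝ) :=
    fun u v => (hGsa u v).trans (real_inner_comm (Gop v) u)
  rw [show (1-θ)/θ = 1/θ - 1 by field_simp] 
  simp only [map_sub, inner_sub_left, inner_sub_right] at h1 h2 hC ⊢
  linarith [gsym (y k) (y (k-1)), gsym (y k) (y (k-2)), gsym (y (k-1)) (y (k-2)), hC, h1, h2]
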